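/- Let λ_n be as above and define b_n(z) = λ_n (λ_{n+1}/λ_n)^z for n ≥ 1. For 0 < c ≤ 1, N ≤ n, and |z| ≤ cN, assuming the inequalities λ_{n+1}^{k-1} λ_{n-k+1} ≤ λ_n^k for 1 ≤ k ≤ N-1, one has |b_n(z) - λ_n| < c ρ_{n,N}, where ρ_{n,N} = λ_n - λ_{n-N} = Σ_{k=0}^{N-1} 1/λ_{n-k}. -/

import Mathlib

open scoped Nat

noncomputable def lam : ℕ → ℝ
  | 0 => 0
  | n + 1 => (lam n + Real.sqrt (lam n ^ 2 + 4)) / 2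

lemma lam_nonneg (n : ℕ) : 0 ≤ lam n := by
  induction n with
  | zero => simp [lam]
  | succ n ih =>
    have h : Real.sqrt (lam n ^ 2 + 4) ≥ 2 := by
      rw [show (2:ℝ) = Real.sqrt 4 by rw [show (4:ℝ) = 2^2 by norm_num, Real.sqrt_sq]; norm_num]
      exact Real.sqrt_le_sqrt (by nlinarith)
    simp only [lam]; linarith

lemma lam_succ_pos (n : ℕ) : 0 < lam (n + 1) := by
  have h : Real.sqrt (lam n ^ 2 + 4) ≥ 2 := by
    rw [show (2:ℝ) = Real.sqrt 4 by rw [show (4:ℝ) = 2^2 by norm_num, Real.sqrt_sq]; norm_num]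
    exact Real.sqrt_le_sqrt (by nlinarith)
  have := lam_nonneg n
  simp only [lam]; linarith

lemma lam_sq (n : ℕ) : lam (n + 1) ^ 2 = lam n * lam (n + 1) + 1 := by
  have h : Real.sqrt (lam n ^ 2 + 4) ^ 2 = lam n ^ 2 + 4 := Real.sq_sqrt (by positivity)
  simp only [lam]; nlinarith [h]

lemma lam_lt_succ (n : ℕ) : lam n < lam (n + 1) := by
  have h := lam_sq n
  have hp := lam_succ_pos n
  nlinarith

lemma lam_mono : StrictMono lam := strictMono_nat_of_lt_succ lam_lt_succ

lemma lam_pos {n : ℕ} (h : 1 ≤ n) : 0 < lam n := by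
  have : lam 0 < lam n := lam_mono (by omega)
  simpa [lam] using this

lemma lam_diff (n : ℕ) : lam (n + 1) - lam n = 1 / lam (n + 1) := by
  have h := lam_sq n
  have hp := lam_succ_pos n
  field_simp
  nlinarith

lemma key (n : ℕ) : ∀ N : ℕ, 1 ≤ N → N ≤ n →
    (∀ k : ℕ, 1 ≤ k → k ≤ N - 1 → lam (n + 1) ^ (k - 1) * lam (n - k + 1) ≤ lam n ^ k) →
    lam (n + 1) ^ N - lam n ^ N < lam n ^ (N - 1) * (lam n - lam (n - N)) := by
  intro N
  induction N with
  | zero => omega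
  | succ N ih =>
    intro _ hn hineq
    match N, ih with
    | 0, _ =>
      -- base case: N' = 1
      have h1 : lam n - lam (n - 1) = 1 / lam n := by
        have := lam_diff (n - 1)
        rwa [show n - 1 + 1 = n by omega] at this
      have hp := lam_pos (le_trans (by norm_num) hn)
      have hp1 := lam_succ_pos n
      have hlt := lam_lt_succ n
      have h2 : lam (n + 1) - lam n < 1 * (lam n - lam (n - 1)) := by
        rw [lam_diff n, h1, one_mul]
        exact one_div_lt_one_div_of_lt hp hlt
      simpa using h2
    | M + 1, ih =>
      have hn1 : (1:ℕ) ≤ n := by omega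
      have IH : lam (n + 1) ^ (M + 1) - lam n ^ (M + 1)
          < lam n ^ M * (lam n - lam (n - (M + 1))) := by
        exact ih (by omega) (by omega) (fun k hk1 hk2 => hineq k hk1 (by omega))
      have hk := hineq (M + 1) (by omega) (by omega)
      -- hk : lam (n+1) ^ M * lam (n - (M+1) + 1) ≤ lam n ^ (M+1)
      simp only [Nat.add_sub_cancel] at hk
      set μ := lam (n + 1) with hμdef
      set l := lam n with hldef
      set a := lam (n - (M + 1)) with hadef
      set b := lam (n - (M + 2)) with hbdef
      have ha : 0 < a := lam_pos (by omega)
      have hab : a - b = 1 / a := by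
        have := lam_diff (n - (M + 2))
        rw [show n - (M + 2) + 1 = n - (M + 1) by omega] at this
        exact this
      have haa : a ≤ lam (n - (M + 1) + 1) := lam_mono.le_iff_le.mpr (by omega)
      have hμM : (0:ℝ) ≤ μ ^ M := pow_nonneg (lam_succ_pos n).le M
      have hk' : μ ^ M * a ≤ l ^ (M + 1) :=
        le_trans (mul_le_mul_of_nonneg_left haa hμM) hk
      have hl : 0 < l := lam_pos hn1
      have hsq : μ ^ 2 = l * μ + 1 := lam_sq n
      have hident : μ ^ (M + 2) - l ^ (M + 2)
          = l * (μ ^ (M + 1) - l ^ (M + 1)) + μ ^ M * (μ ^ 2 - l * μ) := by ring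
      have haux : a * (a - b) = 1 := by rw [hab]; field_simp
      show μ ^ (M + 2) - l ^ (M + 2) < l ^ (M + 1) * (l - b)
      have h2 : μ ^ M ≤ l ^ (M + 1) * (a - b) := by
        have habpos : 0 ≤ a - b := by rw [hab]; positivity
        nlinarith [mul_le_mul_of_nonneg_right hk' habpos]
      calc μ ^ (M + 2) - l ^ (M + 2)
          = l * (μ ^ (M + 1) - l ^ (M + 1)) + μ ^ M := by rw [hident, hsq]; ring_nf
        _ < l * (l ^ M * (l - a)) + l ^ (M + 1) * (a - b) := by
            have := mul_lt_mul_of_pos_left IH hl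
            linarith [h2]
        _ = l ^ (M + 1) * (l - b) := by ring

lemma my_abs_exp_sub_one (w : ℂ) : ‖Complex.exp w - 1‖ ≤ Real.exp (‖w‖) - 1 := by
  have hsC : Summable (fun n : ℕ => w ^ n / n !) := by
    apply Summable.of_norm
    simpa [map_div₀, map_pow] using Real.summable_pow_div_factorial (‖w‖)
  have hsR : Summable (fun n : ℕ => (‖w‖) ^ n / n !) := Real.summable_pow_div_factorial _
  have he : Complex.exp w = ∑' n : ℕ, w ^ n / n ! := by
    rw [Complex.exp_eq_exp_ℂ, NormedSpace.exp_eq_tsum_div]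
  have heR : Real.exp (‖w‖) = ∑' n : ℕ, (‖w‖) ^ n / n ! := by
    rw [Real.exp_eq_exp_ℝ, NormedSpace.exp_eq_tsum_div]
  have h1 : Complex.exp w - 1 = ∑' n : ℕ, w ^ (n+1) / (n+1)! := by
    rw [he, Summable.tsum_eq_zero_add hsC]; simp
  have h2 : Real.exp (‖w‖) - 1 = ∑' n : ℕ, (‖w‖) ^ (n+1) / (n+1)! := by
    rw [heR, Summable.tsum_eq_zero_add hsR]; simp
  rw [h1, h2]
  calc ‖∑' n : ℕ, w ^ (n+1) / (n+1)!‖ ≤ ∑' n : ℕ, ‖w ^ (n+1) / (n+1)!‖ := by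
        simpa using norm_tsum_le_tsum_norm ((hsC.comp_injective (add_left_injective 1)).norm)
    _ = ∑' n : ℕ, (‖w‖) ^ (n+1) / (n+1)! := by
        simp [map_div₀, map_pow, Complex.norm_natCast]

theorem stmt_15 (N n : ℕ) (hN : 1 ≤ N) (hn : N ≤ n) (c : ℝ) (hc0 : 0 < c) (hc1 : c ≤ 1)
    (hineq : ∀ k : ℕ, 1 ≤ k → k ≤ N - 1 →
      lam (n + 1) ^ (k - 1) * lam (n - k + 1) ≤ lam n ^ k)
    (z : ℂ) (hz : ‖z‖ ≤ c * N) :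
    ‖(lam n : ℂ) * Complex.exp (z * Real.log (lam (n + 1) / lam n)) - lam n‖
      < c * (lam n - lam (n - N)) := by
  have hn1 : 1 ≤ n := le_trans hN hn
  have hl : 0 < lam n := lam_pos hn1
  have hμ : lam n < lam (n + 1) := lam_lt_succ n
  have hkey := key n N hN hn hineq
  set r := lam (n + 1) / lam n with hrdef
  have hr1 : 1 < r := (one_lt_div hl).mpr hμ
  have hr0 : 0 < r := lt_trans one_pos hr1
  have hL : 0 ≤ Real.log r := Real.log_nonneg hr1.le
  have hN0 : (0:ℝ) < N := by exact_mod_cast hN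
  set t := ‖z‖ / N with htdef
  have ht0 : 0 ≤ t := div_nonneg (norm_nonneg z) hN0.le
  have htc : t ≤ c := (div_le_iff₀ hN0).mpr hz
  have ht1 : t ≤ 1 := le_trans htc hc1
  have htN : t * (N:ℝ) = ‖z‖ := div_mul_cancel₀ _ hN0.ne'
  have hstep1 : ‖(lam n : ℂ) * Complex.exp (z * (Real.log r : ℂ)) - lam n‖
      ≤ lam n * (Real.exp (‖z‖ * Real.log r) - 1) := by
    have h0 : (lam n : ℂ) * Complex.exp (z * (Real.log r : ℂ)) - lam n
        = (lam n : ℂ) * (Complex.exp (z * (Real.log r : ℂ)) - 1) := by ring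
    rw [h0, norm_mul, Complex.norm_of_nonneg hl.le]
    apply mul_le_mul_of_nonneg_left _ hl.le
    have h1 := my_abs_exp_sub_one (z * (Real.log r : ℂ))
    rwa [norm_mul, Complex.norm_of_nonneg hL] at h1
  have hexp : Real.exp (‖z‖ * Real.log r) = r ^ (‖z‖) := by
    rw [Real.rpow_def_of_pos hr0, mul_comm]
  have hconv : r ^ (‖z‖) ≤ 1 + t * (r ^ N - 1) := by
    have hM : Real.exp ((1 - t) * 0 + t * ((N:ℝ) * Real.log r))
        ≤ (1 - t) * Real.exp 0 + t * Real.exp ((N:ℝ) * Real.log r) :=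
      convexOn_exp.2 (Set.mem_univ _) (Set.mem_univ _) (by linarith) ht0 (by ring)
    have e1 : Real.exp (t * ((N:ℝ) * Real.log r)) = r ^ (‖z‖) := by
      rw [Real.rpow_def_of_pos hr0, ← htN]; ring_nf
    have e2 : Real.exp ((N:ℝ) * Real.log r) = r ^ N := by
      rw [← Real.rpow_natCast r N, Real.rpow_def_of_pos hr0, mul_comm]
    rw [Real.exp_zero] at hM
    rw [mul_zero, zero_add] at hM
    rw [e1, e2] at hM
    linarith
  have hrN1 : (1:ℝ) ≤ r ^ N := one_le_pow₀ hr1.le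
  have halg : lam n * (r ^ N - 1) = (lam (n + 1) ^ N - lam n ^ N) / lam n ^ (N - 1) := by
    obtain ⟨M, rfl⟩ : ∃ M, N = M + 1 := ⟨N - 1, by omega⟩
    rw [hrdef]
    rw [show M + 1 - 1 = M from rfl]
    rw [div_pow, eq_div_iff (pow_ne_zero M hl.ne')]
    field_simp
    ring
  calc ‖(lam n : ℂ) * Complex.exp (z * (Real.log r : ℂ)) - lam n‖
      ≤ lam n * (Real.exp (‖z‖ * Real.log r) - 1) := hstep1
    _ = lam n * (r ^ (‖z‖) - 1) := by rw [hexp]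
    _ ≤ lam n * (t * (r ^ N - 1)) := by
        apply mul_le_mul_of_nonneg_left _ hl.le
        linarith
    _ = t * (lam n * (r ^ N - 1)) := by ring
    _ ≤ c * (lam n * (r ^ N - 1)) := by
        apply mul_le_mul_of_nonneg_right htc
        have : (0:ℝ) ≤ r ^ N - 1 := by linarith
        positivity
    _ = c * ((lam (n + 1) ^ N - lam n ^ N) / lam n ^ (N - 1)) := by rw [halg]
    _ < c * (lam n - lam (n - N)) := by
        apply mul_lt_mul_of_pos_left _ hc0
        rw [div_lt_iff₀ (pow_pos hl _)]
        linarith [hkey]
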